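/- Let x ≠ y be N-bit strings differing in exactly d positions, and for integer p define the product state |ψ^p_{xy}⟩ = ⊗_j |ψ^{pj}_{xy}⟩ where |ψ^{pj}_{xy}⟩ = |x_j⟩ if x_j = y_j and (|x_j⟩ + e^{iπp/(2d)}|y_j⟩)/√2 otherwise. Then |x⟩⟨y|^{⊗2} + |y⟩⟨x|^{⊗2} = (4^d/(4d)) Σ_{p=0}^{4d−1} (−1)^p (|ψ^p_{xy}⟩⟨ψ^p_{xy}|)^{⊗2}. -/

import Mathlib

open scoped Kronecker

/-- The rank-one operator `|v⟩⟨w|` as a matrix: entries `v i * conj (w j)`. -/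
noncomputable def outer {ι : Type*} (v w : ι → ℂ) : Matrix ι ι ℂ :=
  Matrix.of fun i j => v i * (starRingEnd ℂ) (w j)

/-- The operator `|x⟩⟨y|` for computational basis states `x`, `y`. -/
noncomputable def basisOuter {N : ℕ} (x y : Fin N → Fin 2) :
    Matrix (Fin N → Fin 2) (Fin N → Fin 2) ℂ :=
  Matrix.of fun i j => (if i = x then 1 else 0) * (if j = y then 1 else 0)

theorem stmt16 {N : ℕ} (x y : Fin N → Fin 2) (hxy : x ≠ y)
    (d : ℕ) (hd : d = (Finset.univ.filter fun j => x j ≠ y j).card)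
    (ψ : ℕ → (Fin N → Fin 2) → ℂ)
    (hψ : ∀ p i, ψ p i = ∏ j,
      (if x j = y j then (if i j = x j then (1 : ℂ) else 0)
       else (if i j = x j then ((Real.sqrt 2 : ℂ))⁻¹
         else if i j = y j then
           ((Real.sqrt 2 : ℂ))⁻¹ * Complex.exp ((Real.pi : ℂ) * p / (2 * d) * Complex.I)
         else 0))) :
    basisOuter x y ⊗ₖ basisOuter x y + basisOuter y x ⊗ₖ basisOuter y x =
      ((4 : ℂ) ^ d / (4 * d)) • ∑ p ∈ Finset.range (4 * d), ((-1 : ℂ) ^ p) •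
        (outer (ψ p) (ψ p) ⊗ₖ outer (ψ p) (ψ p)) := by
  classical
  have hd0 : 0 < d := by
    rw [hd, Finset.card_pos]
    obtain ⟨t, ht⟩ := Function.ne_iff.mp hxy
    exact ⟨t, by simp [ht]⟩
  have hdC : (d : ℂ) ≠ 0 := Nat.cast_ne_zero.mpr hd0.ne'
  have hπ : (Real.pi : ℂ) ≠ 0 := Complex.ofReal_ne_zero.mpr Real.pi_ne_zero
  have fin2 : ∀ a b e : Fin 2, a ≠ b → e ≠ a → e = b := by decide
  set k : (Fin N → Fin 2) → ℕ :=
    fun i => ((Finset.univ.filter fun t => x t ≠ y t).filter (fun t => i t = y t)).card with hk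
  have hkle : ∀ i, k i ≤ d := fun i => hd ▸ Finset.card_le_card (Finset.filter_subset _ _)
  -- the product-state formula
  have hpsi : ∀ p i, ψ p i = (if (∀ t, x t = y t → i t = x t) then (1:ℂ) else 0) *
      ((Real.sqrt 2 : ℂ))⁻¹ ^ d *
      Complex.exp ((Real.pi : ℂ) * p / (2 * d) * Complex.I) ^ k i := by
    intro p i
    rw [hψ, ← Finset.prod_filter_mul_prod_filter_not Finset.univ (fun j => x j = y j)]
    have h1 : (∏ j ∈ Finset.univ.filter (fun j => x j = y j),
        (if x j = y j then (if i j = x j then (1 : ℂ) else 0)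
         else (if i j = x j then ((Real.sqrt 2 : ℂ))⁻¹
           else if i j = y j then
             ((Real.sqrt 2 : ℂ))⁻¹ * Complex.exp ((Real.pi : ℂ) * p / (2 * d) * Complex.I)
           else 0))) = (if (∀ t, x t = y t → i t = x t) then (1:ℂ) else 0) := by
      rw [Finset.prod_congr rfl (g := fun j => if i j = x j then (1:ℂ) else 0)
        (fun j hj => by simp only [Finset.mem_filter] at hj; simp [hj.2]),
        Finset.prod_boole]
      simp
    have h2 : (∏ j ∈ Finset.univ.filter (fun j => ¬ x j = y j),
        (if x j = y j then (if i j = x j then (1 : ℂ) else 0)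
         else (if i j = x j then ((Real.sqrt 2 : ℂ))⁻¹
           else if i j = y j then
             ((Real.sqrt 2 : ℂ))⁻¹ * Complex.exp ((Real.pi : ℂ) * p / (2 * d) * Complex.I)
           else 0))) = ((Real.sqrt 2 : ℂ))⁻¹ ^ d *
        Complex.exp ((Real.pi : ℂ) * p / (2 * d) * Complex.I) ^ k i := by
      rw [Finset.prod_congr rfl (g := fun j => ((Real.sqrt 2 : ℂ))⁻¹ *
          (if i j = y j then Complex.exp ((Real.pi : ℂ) * p / (2 * d) * Complex.I) else 1))
        (fun j hj => by
          simp only [Finset.mem_filter] at hj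
          by_cases h : i j = x j
          · have : ¬ i j = y j := h ▸ hj.2
            simp [hj.2, h, this]
          · have : i j = y j := fin2 _ _ _ hj.2 h
            simp only [hj.2, if_false, h, this, if_true]
            rw [if_neg (fun he => hj.2 he.symm)])]
      rw [Finset.prod_mul_distrib, Finset.prod_const, Finset.prod_ite, Finset.prod_const,
        Finset.prod_const_one, mul_one, hd]
    rw [h1, h2, mul_assoc]
  -- conjugate formula
  have hconj : ∀ p i, (starRingEnd ℂ) (ψ p i) =
      (if (∀ t, x t = y t → i t = x t) then (1:ℂ) else 0) *
      ((Real.sqrt 2 : ℂ))⁻¹ ^ d *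
      (Complex.exp ((Real.pi : ℂ) * p / (2 * d) * Complex.I))⁻¹ ^ k i := by
    intro p i
    rw [hpsi]
    simp only [map_mul, map_pow, map_inv₀, apply_ite, map_one, map_zero, Complex.conj_ofReal]
    congr 2
    rw [← Complex.exp_conj, ← Complex.exp_neg]
    congr 1
    simp only [map_mul, map_div₀, Complex.conj_I, Complex.conj_ofReal, map_natCast, map_ofNat]
    ring
  -- membership lemmas for k
  have hkx : ∀ i : Fin N → Fin 2, (∀ t, x t = y t → i t = x t) → (k i = 0 ↔ i = x) := by
    intro i hχ
    constructor
    · intro h0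
      have he := Finset.filter_eq_empty_iff.mp (Finset.card_eq_zero.mp h0)
      funext t
      by_cases ht : x t = y t
      · exact hχ t ht
      · exact fin2 _ _ _ (fun h => ht h.symm) (he (by simp [ht]))
    · rintro rfl
      refine Finset.card_eq_zero.mpr (Finset.filter_eq_empty_iff.mpr ?_)
      intro t ht
      simp only [Finset.mem_filter] at ht
      exact ht.2
  have hky : ∀ i : Fin N → Fin 2, (∀ t, x t = y t → i t = x t) → (k i = d ↔ i = y) := by
    intro i hχ
    constructor
    · intro h0
      have hsub : ((Finset.univ.filter fun t => x t ≠ y t).filter (fun t => i t = y t)) =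
          (Finset.univ.filter fun t => x t ≠ y t) :=
        Finset.eq_of_subset_of_card_le (Finset.filter_subset _ _)
          (by simp only [hk] at h0; omega)
      funext t
      by_cases ht : x t = y t
      · exact (hχ t ht).trans ht
      · have : t ∈ (Finset.univ.filter fun t => x t ≠ y t) := by simp [ht]
        rw [← hsub] at this
        exact (Finset.mem_filter.mp this).2
    · intro h0
      rw [h0]
      show (Finset.filter (fun t => y t = y t)
        (Finset.filter (fun t => x t ≠ y t) Finset.univ)).card = d
      rw [Finset.filter_true_of_mem (fun t _ => rfl)]
      exact hd.symm
  have hnotχ : ∀ i : Fin N → Fin 2, ¬(∀ t, x t = y t → i t = x t) → i ≠ x ∧ i ≠ y := by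
    intro i hi
    constructor
    · rintro rfl; exact hi fun t _ => rfl
    · rintro rfl; exact hi fun t ht => ht.symm
  ext ⟨i, i'⟩ ⟨j, j'⟩
  simp only [Matrix.add_apply, Matrix.smul_apply, Matrix.sum_apply, Matrix.kroneckerMap_apply,
    smul_eq_mul, basisOuter, outer, Matrix.of_apply]
  by_cases hχi : ∀ t, x t = y t → i t = x t
  swap
  · obtain ⟨h1, h2⟩ := hnotχ i hχi
    simp [hpsi, hχi, h1, h2]
  by_cases hχj : ∀ t, x t = y t → j t = x t
  swap
  · obtain ⟨h1, h2⟩ := hnotχ j hχj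
    simp [hpsi, hχj, h1, h2]
  by_cases hχi' : ∀ t, x t = y t → i' t = x t
  swap
  · obtain ⟨h1, h2⟩ := hnotχ i' hχi'
    simp [hpsi, hχi', h1, h2]
  by_cases hχj' : ∀ t, x t = y t → j' t = x t
  swap
  · obtain ⟨h1, h2⟩ := hnotχ j' hχj'
    simp [hpsi, hχj', h1, h2]
  -- all χ hold
  have hexp : ∀ p : ℕ, (-1:ℂ)^p *
      (Complex.exp ((Real.pi : ℂ) * p / (2 * d) * Complex.I) ^ (k i + k i') *
       (Complex.exp ((Real.pi : ℂ) * p / (2 * d) * Complex.I))⁻¹ ^ (k j + k j')) =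
      (Complex.exp ((Real.pi : ℂ) * (2*(d:ℂ) + (k i + k i' : ℕ) - (k j + k j' : ℕ)) / (2 * d)
        * Complex.I)) ^ p := by
    intro p
    rw [← Complex.exp_pi_mul_I, ← Complex.exp_neg, ← Complex.exp_nat_mul,
      ← Complex.exp_nat_mul, ← Complex.exp_nat_mul, ← Complex.exp_nat_mul,
      ← Complex.exp_add, ← Complex.exp_add]
    congr 1
    field_simp
    ring
  have hsum1 : ∑ p ∈ Finset.range (4*d),
      (-1:ℂ)^p * ((ψ p i * (starRingEnd ℂ) (ψ p j)) * (ψ p i' * (starRingEnd ℂ) (ψ p j'))) =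
      ((Real.sqrt 2 : ℂ))⁻¹ ^ (4*d) * ∑ p ∈ Finset.range (4*d),
        (Complex.exp ((Real.pi : ℂ) * (2*(d:ℂ) + (k i + k i' : ℕ) - (k j + k j' : ℕ)) / (2 * d)
          * Complex.I)) ^ p := by
    rw [Finset.mul_sum]
    refine Finset.sum_congr rfl fun p _ => ?_
    rw [hpsi p i, hpsi p i', hconj p j, hconj p j', if_pos hχi, if_pos hχi', if_pos hχj,
      if_pos hχj', ← hexp p]
    ring
  rw [hsum1]
  have hc4 : ((Real.sqrt 2 : ℂ))⁻¹ ^ (4*d) = ((4:ℂ)^d)⁻¹ := by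
    have h2 : ((Real.sqrt 2 : ℝ) : ℂ) ^ 2 = 2 := by
      rw [← Complex.ofReal_pow]
      norm_num [Real.sq_sqrt]
    have h4 : ((Real.sqrt 2 : ℝ) : ℂ) ^ 4 = 4 := by
      rw [show (4:ℕ) = 2*2 from rfl, pow_mul, h2]
      norm_num
    rw [inv_pow, pow_mul, h4]
  rw [hc4]
  by_cases hA : k i + k i' = 0 ∧ k j + k j' = 2*d
  · have e1 : i = x := (hkx i hχi).mp (by omega)
    have e3 : i' = x := (hkx i' hχi').mp (by omega)
    have e2 : j = y := (hky j hχj).mp (by have := hkle j; have := hkle j'; omega)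
    have e4 : j' = y := (hky j' hχj').mp (by have := hkle j; have := hkle j'; omega)
    rw [hA.1, hA.2,
      show (Real.pi:ℂ) * (2*(d:ℂ) + ((0:ℕ):ℂ) - ((2*d:ℕ):ℂ)) / (2*(d:ℂ)) * Complex.I = 0
        from by push_cast; ring,
      Complex.exp_zero]
    simp only [one_pow, Finset.sum_const, Finset.card_range, nsmul_eq_mul]
    subst e1 e2 e3 e4
    simp only [if_pos rfl, if_neg hxy, if_neg (Ne.symm hxy), one_mul, mul_one, zero_mul,
      mul_zero, add_zero]
    push_cast
    field_simp
  by_cases hB : k i + k i' = 2*d ∧ k j + k j' = 0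
  · have e1 : i = y := (hky i hχi).mp (by have := hkle i; have := hkle i'; omega)
    have e3 : i' = y := (hky i' hχi').mp (by have := hkle i; have := hkle i'; omega)
    have e2 : j = x := (hkx j hχj).mp (by omega)
    have e4 : j' = x := (hkx j' hχj').mp (by omega)
    rw [hB.1, hB.2,
      show (Real.pi:ℂ) * (2*(d:ℂ) + ((2*d:ℕ):ℂ) - ((0:ℕ):ℂ)) / (2*(d:ℂ)) * Complex.I
          = 2*(Real.pi:ℂ)*Complex.I from by push_cast; field_simp; ring,
      Complex.exp_two_pi_mul_I]
    simp only [one_pow, Finset.sum_const, Finset.card_range, nsmul_eq_mul]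
    subst e1 e2 e3 e4
    simp only [if_pos rfl, if_neg hxy, if_neg (Ne.symm hxy), one_mul, mul_one, zero_mul,
      mul_zero, zero_add]
    push_cast
    field_simp
  · -- the sum vanishes
    have hblej := hkle j
    have hblej' := hkle j'
    have hblei := hkle i
    have hblei' := hkle i'
    have hble2 : k j + k j' ≤ 2*d + (k i + k i') := by omega
    have hmc : ((2*d + (k i + k i') - (k j + k j') : ℕ) : ℂ)
        = 2*(d:ℂ) + ((k i + k i' : ℕ):ℂ) - ((k j + k j' : ℕ):ℂ) := by
      push_cast [hble2]
      ring
    set m : ℕ := 2*d + (k i + k i') - (k j + k j') with hm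
    have hm0 : m ≠ 0 := fun h => hA ⟨by omega, by omega⟩
    have hm4 : m < 4*d := by
      rcases Nat.lt_or_ge m (4*d) with h | h
      · exact h
      · exact absurd ⟨by omega, by omega⟩ hB
    have hω : Complex.exp ((Real.pi:ℂ) * (2*(d:ℂ) + ((k i + k i' : ℕ):ℂ)
        - ((k j + k j' : ℕ):ℂ)) / (2*(d:ℂ)) * Complex.I) ≠ 1 := by
      rw [← hmc]
      intro h
      rw [Complex.exp_eq_one_iff] at h
      obtain ⟨n, hn⟩ := h
      have h4 : ((m:ℂ)) * ((Real.pi:ℂ) * Complex.I)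
          = ((n:ℂ) * (4*(d:ℂ))) * ((Real.pi:ℂ) * Complex.I) := by
        field_simp at hn
        linear_combination ((Real.pi:ℂ) * Complex.I) * hn
      have h5 : (m:ℂ) = (n:ℂ) * (4*(d:ℂ)) :=
        mul_right_cancel₀ (mul_ne_zero hπ Complex.I_ne_zero) h4
      have h6 : (m:ℤ) = n * (4*(d:ℤ)) := by exact_mod_cast h5
      have h7 : (4*(d:ℤ)) ∣ (m:ℤ) := ⟨n, by rw [h6]; ring⟩
      have h8 := Int.le_of_dvd (by exact_mod_cast Nat.pos_of_ne_zero hm0) h7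
      have h9 : (m:ℤ) < 4*(d:ℤ) := by exact_mod_cast hm4
      omega
    rw [geom_sum_eq hω (4*d)]
    have hpow : Complex.exp ((Real.pi:ℂ) * (2*(d:ℂ) + ((k i + k i' : ℕ):ℂ)
        - ((k j + k j' : ℕ):ℂ)) / (2*(d:ℂ)) * Complex.I) ^ (4*d) = 1 := by
      rw [← Complex.exp_nat_mul, ← hmc,
        show ((4*d:ℕ):ℂ) * ((Real.pi:ℂ) * ((m:ℕ):ℂ) / (2*(d:ℂ)) * Complex.I)
            = ((m:ℤ):ℂ) * (2*(Real.pi:ℂ)*Complex.I) from by push_cast; field_simp; ring]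
      exact Complex.exp_int_mul_two_pi_mul_I m
    rw [hpow]
    have hz1 : ((if i = x then (1:ℂ) else 0) * (if j = y then 1 else 0)) *
        ((if i' = x then (1:ℂ) else 0) * (if j' = y then 1 else 0)) = 0 := by
      by_contra h
      have e1 : i = x := by by_contra h'; simp [h'] at h
      have e2 : j = y := by by_contra h'; simp [h'] at h
      have e3 : i' = x := by by_contra h'; simp [h'] at h
      have e4 : j' = y := by by_contra h'; simp [h'] at h
      refine hA ⟨?_, ?_⟩
      · rw [(hkx i hχi).mpr e1, (hkx i' hχi').mpr e3]
      · rw [(hky j hχj).mpr e2, (hky j' hχj').mpr e4]; omega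
    have hz2 : ((if i = y then (1:ℂ) else 0) * (if j = x then 1 else 0)) *
        ((if i' = y then (1:ℂ) else 0) * (if j' = x then 1 else 0)) = 0 := by
      by_contra h
      have e1 : i = y := by by_contra h'; simp [h'] at h
      have e2 : j = x := by by_contra h'; simp [h'] at h
      have e3 : i' = y := by by_contra h'; simp [h'] at h
      have e4 : j' = x := by by_contra h'; simp [h'] at h
      refine hB ⟨?_, ?_⟩
      · rw [(hky i hχi).mpr e1, (hky i' hχi').mpr e3]; omega
      · rw [(hkx j hχj).mpr e2, (hkx j' hχj').mpr e4]
    rw [hz1, hz2]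
    ring
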